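/- Miniaturised Maclagan theorem (MM): let K be a field. For all d, l ∈ ℕ there exists M ∈ ℕ such that for every sequence I_0, …, I_M of monomial ideals in K[X_d, …, X_0, Y] with deg(I_i) ≤ l + i for all i ≤ M, there exist i < j ≤ M with I_i ⊇ I_j. -/

import Mathlib

open Set

/-- reverse inclusion on sets -/
def rev (β : Type*) : Set β → Set β → Prop := fun A B => B ⊆ A

instance (β : Type*) : IsTrans (Set β) (rev β) := ⟨fun _ _ _ h1 h2 => h2.trans h1⟩
instance (β : Type*) : IsRefl (Set β) (rev β) := ⟨fun _ => subset_rfl⟩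

open Classical in
noncomputable def rkFun {P : Type*} (g : ℕ → P) : ℕ :=
  if h : ∃ N, ∀ m, N ≤ m → g m = g N then Nat.find h else 0

lemma rk_tail_lt {P : Type*} {g : ℕ → P} (hex : ∃ N, ∀ m, N ≤ m → g m = g N)
    (hnc : ¬ ∀ m, g m = g 0) : rkFun (fun k => g (k + 1)) < rkFun g := by
  classical
  have hN := Nat.find_spec hex
  set N := Nat.find hex with hNdef
  have hNpos : 0 < N := by
    rcases Nat.eq_zero_or_pos N with h0 | h
    · exact absurd (fun m => by rw [hN m (by omega), hN 0 (by omega)]) hnc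
    · exact h
  have hex' : ∃ N', ∀ m, N' ≤ m → g (m + 1) = g (N' + 1) := by
    refine ⟨N - 1, fun m hm => ?_⟩
    rw [hN (m+1) (by omega), show N - 1 + 1 = N by omega]
  have h1 : rkFun (fun k => g (k + 1)) = Nat.find hex' := dif_pos hex'
  have h2 : rkFun g = N := dif_pos hex
  rw [h1, h2]
  have h3 : (∀ m, N - 1 ≤ m → g (m + 1) = g (N - 1 + 1)) := fun m hm => by
    rw [hN (m+1) (by omega), show N - 1 + 1 = N by omega]
  have := Nat.find_le (h := hex') h3
  omega

/-- Sequences that are `le`-antitone, take values in `s`, and are eventually constant,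
ordered pointwise, form a pwo class, provided `s` is pwo. -/
theorem lemmaA {P : Type*} (le : P → P → Prop) [IsTrans P le] [IsRefl P le] {s : Set P}
    (hs : s.PartiallyWellOrderedOn le) :
    Set.PartiallyWellOrderedOn
      {g : ℕ → P | (∀ k, le (g (k + 1)) (g k)) ∧ (∀ k, g k ∈ s) ∧ ∃ N, ∀ m, N ≤ m → g m = g N}
      (fun g h => ∀ k, le (g k) (h k)) := by
  classical
  rw [Set.PartiallyWellOrderedOn.iff_not_exists_isMinBadSeq rkFun]
  rintro ⟨f, ⟨hmem, hbad⟩, hfmin⟩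
  by_cases hinf : {i : ℕ | ∀ m, f i m = f i 0}.Infinite
  · haveI := hinf.to_subtype
    set e := Nat.orderEmbeddingOfSet {i : ℕ | ∀ m, f i m = f i 0} with he
    have hemem : ∀ p, ∀ m, f (e p) m = f (e p) 0 := by
      intro p
      have : e p ∈ {i : ℕ | ∀ m, f i m = f i 0} := by
        rw [← Nat.orderEmbeddingOfSet_range {i : ℕ | ∀ m, f i m = f i 0}]
        exact ⟨p, rfl⟩
      exact this
    obtain ⟨p, q, hpq, hle⟩ := hs.exists_lt (f := fun m => f (e m) 0) (fun m => (hmem (e m)).2.1 0)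
    refine hbad (e p) (e q) (e.strictMono hpq) (fun k => ?_)
    rw [hemem p k, hemem q k]
    exact hle
  · obtain ⟨b, hb⟩ := (Set.not_infinite.mp hinf).bddAbove
    have hnc : ∀ i, b + 1 ≤ i → ¬ ∀ m, f i m = f i 0 := fun i hi hci =>
      absurd (hb hci) (by omega)
    haveI : IsPreorder P le := {}
    obtain ⟨g, hg⟩ := hs.exists_monotone_subseq (f := fun m => f (b + 1 + m) 0)
      (fun m => (hmem _).2.1 0)
    set φ : ℕ → ℕ := fun t => b + 1 + g t with hφ
    have hφmono : StrictMono φ := fun x y h => by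
      simp only [φ, Nat.add_lt_add_iff_left]
      exact g.strictMono h
    have hφ0 : ∀ t, φ 0 ≤ φ t := fun t => (hφmono.monotone (Nat.zero_le t))
    set h : ℕ → ℕ → P := fun m =>
      if m < φ 0 then f m else (fun k => f (φ (m - φ 0)) (k + 1)) with hh
    have hagree : ∀ m, m < φ 0 → f m = h m := fun m hm => by simp [h, hm]
    have htail : ∀ m, φ 0 ≤ m → h m = fun k => f (φ (m - φ 0)) (k + 1) := fun m hm => by
      simp [h, Nat.not_lt.mpr hm]
    have hbad' : Set.PartiallyWellOrderedOn.IsBadSeq (fun g h => ∀ k, le (g k) (h k))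
        {g : ℕ → P | (∀ k, le (g (k + 1)) (g k)) ∧ (∀ k, g k ∈ s) ∧
          ∃ N, ∀ m, N ≤ m → g m = g N} h := by
      constructor
      · intro m
        rcases lt_or_ge m (φ 0) with hm | hm
        · rw [← hagree m hm]; exact hmem m
        · rw [htail m hm]
          obtain ⟨h1, h2, N, hN⟩ := hmem (φ (m - φ 0))
          exact ⟨fun k => h1 (k + 1), fun k => h2 (k + 1),
            ⟨N, fun m' hm' => by
              show f (φ (m - φ 0)) (m' + 1) = f (φ (m - φ 0)) (N + 1)
              rw [hN (m' + 1) (by omega), hN (N + 1) (by omega)]⟩⟩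
      · intro m n hmn hr
        rcases lt_or_ge n (φ 0) with hn | hn
        · refine hbad m n hmn (fun k => ?_)
          have := hr k
          rwa [← hagree m (hmn.trans hn), ← hagree n hn] at this
        · rcases lt_or_ge m (φ 0) with hm | hm
          · refine hbad m (φ (n - φ 0)) (lt_of_lt_of_le hm (hφ0 _)) (fun k => ?_)
            have h1 := hr k
            rw [← hagree m hm, htail n hn] at h1
            exact Trans.trans h1 ((hmem (φ (n - φ 0))).1 k)
          · refine hbad (φ (m - φ 0)) (φ (n - φ 0)) (hφmono (by omega)) (fun k => ?_)
            cases k with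
            | zero => exact hg (m - φ 0) (n - φ 0) (by omega)
            | succ k' =>
              have h1 := hr k'
              rwa [htail m hm, htail n hn] at h1
    refine hfmin (φ 0) h (fun m hm => hagree m hm) ?_ hbad'
    have h0 : h (φ 0) = fun k => f (φ 0) (k + 1) := by
      rw [htail (φ 0) le_rfl, Nat.sub_self]
    rw [h0]
    exact rk_tail_lt (hmem (φ 0)).2.2 (hnc (φ 0) (Nat.le_add_right _ _))

/-- The set of upper sets of a preorder. -/
def UpSets (β : Type*) [Preorder β] : Set (Set β) := {U | IsUpperSet U}

/-- Transfer along an order-reflecting bijection. -/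
theorem upsets_pwo_transfer {β γ : Type*} [Preorder β] [Preorder γ] (e : β ≃ γ)
    (he : ∀ x y, x ≤ y ↔ e x ≤ e y)
    (h : (UpSets γ).PartiallyWellOrderedOn (rev γ)) :
    (UpSets β).PartiallyWellOrderedOn (rev β) := by
  rw [Set.partiallyWellOrderedOn_iff_exists_lt]
  intro F hF
  obtain ⟨p, q, hpq, hle⟩ := h.exists_lt (f := fun i => e '' F i) (by
    intro i y z hyz hy
    obtain ⟨x, hx, rfl⟩ := hy
    have : x ≤ e.symm z := by rw [he]; simpa using hyz
    exact ⟨e.symm z, hF i this hx, by simp⟩)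
  refine ⟨p, q, hpq, fun x hx => ?_⟩
  obtain ⟨x', hx', hxx⟩ := hle ⟨x, hx, rfl⟩
  rwa [← e.injective hxx]

/-- Base case: upper sets of a finite type. -/
theorem upsets_pwo_of_finite {β : Type*} [Preorder β] [Finite β] :
    (UpSets β).PartiallyWellOrderedOn (rev β) := by
  rw [Set.partiallyWellOrderedOn_iff_exists_lt]
  intro F _
  obtain ⟨p, q, hpq, heq⟩ := Finite.exists_ne_map_eq_of_infinite F
  rcases hpq.lt_or_gt with h | h
  · exact ⟨p, q, h, heq.symm.subset⟩
  · exact ⟨q, p, h, heq.subset⟩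

/-- Induction step: from upper sets of `α` to upper sets of `α × ℕ`. -/
theorem upsets_pwo_step {α : Type*} [Preorder α]
    (hα : (Set.univ : Set α).PartiallyWellOrderedOn (· ≤ ·))
    (hU : (UpSets α).PartiallyWellOrderedOn (rev α)) :
    (UpSets (α × ℕ)).PartiallyWellOrderedOn (rev (α × ℕ)) := by
  rw [Set.partiallyWellOrderedOn_iff_exists_lt]
  intro F hF
  set G : ℕ → ℕ → Set α := fun i k => {a | (a, k) ∈ F i} with hG
  have hGmem : ∀ i, G i ∈ {g : ℕ → Set α | (∀ k, rev α (g (k + 1)) (g k)) ∧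
      (∀ k, g k ∈ UpSets α) ∧ ∃ N, ∀ m, N ≤ m → g m = g N} := by
    intro i
    refine ⟨fun k a ha => hF i (show ((a : α), k) ≤ (a, k + 1) by simp) ha,
      fun k a b hab ha => hF i (show ((a : α), k) ≤ (b, k) by simp [hab]) ha, ?_⟩
    -- eventual constancy via pwo of α
    by_contra hev
    push_neg at hev
    -- for each N there is m > N with G i m ≠ G i N, and the slices increase
    have hmono : ∀ m n : ℕ, m ≤ n → G i m ⊆ G i n := by
      intro m n hmn a ha
      exact hF i (show ((a : α), m) ≤ (a, n) by simp [hmn]) ha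
    have step : ∀ N : ℕ, ∃ p : α × ℕ, N < p.2 ∧ p.1 ∈ G i p.2 ∧ p.1 ∉ G i N := by
      intro N
      obtain ⟨m, hm, hne⟩ := hev N
      have hlt : N < m := lt_of_le_of_ne hm (fun h => hne (by rw [← h]))
      have : ¬ G i m ⊆ G i N := fun hsub => hne (le_antisymm hsub (hmono N m hm))
      obtain ⟨a, ha, hna⟩ := Set.not_subset.mp this
      exact ⟨(a, m), hlt, ha, hna⟩
    choose w hw1 hw2 hw3 using step
    -- iterate
    set Nseq : ℕ → ℕ := fun t => Nat.rec 0 (fun _ prev => (w prev).2) t with hNseq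
    have hNmono : StrictMono Nseq := strictMono_nat_of_lt_succ (fun t => hw1 _)
    obtain ⟨p, q, hpq, hle⟩ := hα.exists_lt (f := fun t => (w (Nseq t)).1) (fun _ => Set.mem_univ _)
    refine hw3 (Nseq q) ?_
    have h1 : (w (Nseq p)).1 ∈ G i (Nseq (p + 1)) := hw2 _
    have h2 : G i (Nseq (p + 1)) ⊆ G i (Nseq q) := hmono _ _ (hNmono.monotone (show p + 1 ≤ q by omega))
    exact (hF i (show ((w (Nseq p)).1, Nseq q) ≤ ((w (Nseq q)).1, Nseq q) by simp [hle]) (h2 h1))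
  obtain ⟨p, q, hpq, hle⟩ := (lemmaA (rev α) hU).exists_lt hGmem
  refine ⟨p, q, hpq, fun x hx => ?_⟩
  have := hle x.2 (show x.1 ∈ G q x.2 by simp only [hG, Set.mem_setOf_eq, Prod.mk.eta]; exact hx)
  simpa only [hG, Set.mem_setOf_eq, Prod.mk.eta] using this

theorem upsets_pwo_pi (n : ℕ) :
    (UpSets (Fin n → ℕ)).PartiallyWellOrderedOn (rev (Fin n → ℕ)) := by
  induction n with
  | zero => exact upsets_pwo_of_finite
  | succ n ih =>
    have hα : (Set.univ : Set (Fin n → ℕ)).PartiallyWellOrderedOn (· ≤ ·) :=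
      Set.isPWO_univ_iff.mpr inferInstance
    have hstep := upsets_pwo_step hα ih
    refine upsets_pwo_transfer ((Fin.consEquiv (fun _ : Fin (n + 1) => ℕ)).symm.trans (Equiv.prodComm ℕ (Fin n → ℕ)))
      (fun x y => ?_) hstep
    simp only [Equiv.trans_apply, Fin.consEquiv_symm_apply, Equiv.prodComm_apply, Prod.swap_prod_mk,
      Prod.mk_le_mk]
    constructor
    · intro h
      exact ⟨fun i => h _, h 0⟩
    · rintro ⟨h1, h2⟩ i
      rcases Fin.eq_zero_or_eq_succ i with rfl | ⟨j, rfl⟩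
      · exact h2
      · exact h1 j

theorem maclagan (n : ℕ) :
    (UpSets (Fin n →₀ ℕ)).PartiallyWellOrderedOn (rev (Fin n →₀ ℕ)) := by
  refine upsets_pwo_transfer (Finsupp.equivFunOnFinite) (fun x y => ?_) (upsets_pwo_pi n)
  rw [Finsupp.le_def, Pi.le_def]
  exact Iff.rfl

lemma bounded_deg_finite (n D : ℕ) :
    {s : Fin n →₀ ℕ | (s.sum fun _ e => e) ≤ D}.Finite := by
  have hsub : {s : Fin n →₀ ℕ | (s.sum fun _ e => e) ≤ D} ⊆
      Set.Iic (Finsupp.equivFunOnFinite.symm (fun _ => D)) := by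
    intro s hs
    rw [Set.mem_Iic, Finsupp.le_def]
    intro x
    have hx : s x ≤ s.sum fun _ e => e := by
      by_cases h : s x = 0
      · simp [h]
      · exact Finset.single_le_sum (f := fun i => s i) (fun i _ => Nat.zero_le _)
          (Finsupp.mem_support_iff.mpr h)
    simpa using hx.trans hs
  exact (Set.finite_Iic _).subset hsub

/-- `I` is a monomial ideal generated by monomials of total degree at most `deg`. -/
def MonGen {K : Type*} [Field K] {n : ℕ} (I : Ideal (MvPolynomial (Fin n) K)) (deg : ℕ) : Prop :=
  ∃ S : Set (Fin n →₀ ℕ), (∀ s ∈ S, (s.sum fun _ e => e) ≤ deg) ∧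
    I = Ideal.span ((fun s => (MvPolynomial.monomial s (1 : K))) '' S)

/-- Miniaturised Maclagan theorem (MM): for all `d, l` there is `M` such that every
sequence `I_0, …, I_M` of monomial ideals in `K[X_d, …, X_0, Y]` with
`deg (I i) ≤ l + i` admits `i < j ≤ M` with `I i ⊇ I j`. -/
theorem miniaturisedMaclagan (K : Type*) [Field K] (d l : ℕ) :
    ∃ M : ℕ, ∀ I : ℕ → Ideal (MvPolynomial (Fin (d + 2)) K),
      (∀ i ≤ M, MonGen (I i) (l + i)) →
      ∃ i j, i < j ∧ j ≤ M ∧ I j ≤ I i := by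
  by_contra hM
  push_neg at hM
  choose W hW1 hW2 using hM
  let 𝒰 : Ultrafilter ℕ := Ultrafilter.of Filter.cofinite
  have hcof : ∀ i : ℕ, {M : ℕ | i ≤ M} ∈ 𝒰 := by
    intro i
    refine Ultrafilter.of_le Filter.cofinite ?_
    rw [Filter.mem_cofinite]
    exact (Set.finite_Iio i).subset (fun x hx => by simpa using hx)
  have hval : ∀ i, ∃ J, {M : ℕ | i ≤ M ∧ W M i = J} ∈ 𝒰 := by
    intro i
    set 𝔽 : Set (Ideal (MvPolynomial (Fin (d + 2)) K)) :=
      (fun S => Ideal.span ((fun s => (MvPolynomial.monomial s (1 : K))) '' S)) ''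
        {S | S ⊆ {s : Fin (d + 2) →₀ ℕ | (s.sum fun _ e => e) ≤ l + i}} with h𝔽
    have h𝔽fin : 𝔽.Finite := ((bounded_deg_finite (d + 2) (l + i)).finite_subsets).image _
    have hcover : {M : ℕ | i ≤ M} ⊆ ⋃ J ∈ 𝔽, {M : ℕ | i ≤ M ∧ W M i = J} := by
      intro M hMi
      obtain ⟨S, hS1, hS2⟩ := hW1 M i hMi
      exact Set.mem_biUnion ⟨S, fun s hs => hS1 s hs, hS2.symm⟩ ⟨hMi, rfl⟩
    have hmem : (⋃ J ∈ 𝔽, {M : ℕ | i ≤ M ∧ W M i = J}) ∈ 𝒰 :=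
      Filter.mem_of_superset (hcof i) hcover
    obtain ⟨J, _, hJ⟩ := (Ultrafilter.finite_biUnion_mem_iff h𝔽fin).mp hmem
    exact ⟨J, hJ⟩
  choose v hv using hval
  have hbadpair : ∀ i j, i < j → ¬ v j ≤ v i := by
    intro i j hij hle
    have hint : ({M : ℕ | i ≤ M ∧ W M i = v i} ∩ {M : ℕ | j ≤ M ∧ W M j = v j}) ∈ 𝒰 :=
      Filter.inter_mem (hv i) (hv j)
    obtain ⟨M, hMi, hMj⟩ := Ultrafilter.nonempty_of_mem hint
    refine hW2 M i j hij hMj.1 ?_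
    rw [hMi.2, hMj.2]
    exact hle
  have hvgen : ∀ i, MonGen (v i) (l + i) := by
    intro i
    obtain ⟨M, hM1, hM2⟩ := Ultrafilter.nonempty_of_mem (hv i)
    rw [← hM2]
    exact hW1 M i hM1
  choose S hS1 hS2 using hvgen
  set U : ℕ → Set (Fin (d + 2) →₀ ℕ) := fun i => {t | ∃ s ∈ S i, s ≤ t} with hU
  have hUup : ∀ i, U i ∈ UpSets (Fin (d + 2) →₀ ℕ) := by
    rintro i a b hab ⟨s, hs, hsa⟩
    exact ⟨s, hs, hsa.trans hab⟩
  obtain ⟨p, q, hpq, hsub⟩ := (maclagan (d + 2)).exists_lt hUup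
  refine hbadpair p q hpq ?_
  rw [hS2 q, hS2 p, Ideal.span_le]
  rintro x ⟨t, ht, rfl⟩
  obtain ⟨s, hs, hst⟩ : t ∈ U p := hsub ⟨t, ht, le_rfl⟩
  have hmem : (MvPolynomial.monomial t (1 : K)) ∈
      Ideal.span ((fun s => (MvPolynomial.monomial s (1 : K))) '' S p) := by
    classical
    rw [MvPolynomial.mem_ideal_span_monomial_image]
    intro xi hxi
    rw [MvPolynomial.support_monomial, if_neg (one_ne_zero)] at hxi
    simp only [Finset.mem_singleton] at hxi
    exact ⟨s, hs, hxi ▸ hst⟩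
  exact hmem
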